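/- Let n ≥ 3 and let S_n be the star graph on vertices {0,1,...,n−1} with center 0. Then PsEnd(S_n) equals the union of the following three sets: (i) {α : 0 ∈ dom(α), 0α = 0, {1,...,n−1}α ⊆ {1,...,n−1}} ∪ {α : dom(α) ⊆ {1,...,n−1}, im(α) ⊆ {1,...,n−1}}; (ii) {α : 0 ∉ dom(α) and im(α) = {0}}; (iii) {α : 0 ∈ dom(α), 0α ≠ 0 and {1,...,n−1}α ⊆ {0}}, where all α range over partial maps on {0,1,...,n−1}. -/

import Mathlib

variable {V : Type*}

/-- Partial transformations of `V`. -/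
abbrev PTrans (V : Type*) := V → Option V

/-- Monoid of partial transformations under (left-to-right) composition. -/
instance : Monoid (PTrans V) where
  mul f g := fun v => (f v).bind g
  one := fun v => some v
  mul_assoc f g h := by
    funext v
    show ((f v).bind g).bind h = (f v).bind (fun x => (g x).bind h)
    cases f v <;> simp
  one_mul f := by funext v; rfl
  mul_one f := by
    funext v
    show (f v).bind (fun x => some x) = f v
    cases f v <;> simp

/-- Domain of a partial transformation. -/
def pdom (α : PTrans V) : Set V := {u | α u ≠ none}

/-- Image of a partial transformation. -/
def pim (α : PTrans V) : Set V := {v | ∃ u, α u = some v}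

def IsPEnd (G : SimpleGraph V) (α : PTrans V) : Prop :=
  ∀ u v u' v', α u = some u' → α v = some v' → G.Adj u v → G.Adj u' v'

def IsPwEnd (G : SimpleGraph V) (α : PTrans V) : Prop :=
  ∀ u v u' v', α u = some u' → α v = some v' → G.Adj u v → u' ≠ v' → G.Adj u' v'

def IsPsEnd (G : SimpleGraph V) (α : PTrans V) : Prop :=
  ∀ u v u' v', α u = some u' → α v = some v' → (G.Adj u v ↔ G.Adj u' v')

def IsPswEnd (G : SimpleGraph V) (α : PTrans V) : Prop :=
  ∀ u v u' v', α u = some u' → α v = some v' → ((G.Adj u v ∧ u' ≠ v') ↔ G.Adj u' v')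

/-- Injectivity of a partial transformation. -/
def PInjective (α : PTrans V) : Prop :=
  ∀ u v w, α u = some w → α v = some w → u = v

open Classical in
/-- The inverse of a partial (injective) transformation. -/
noncomputable def pinv (α : PTrans V) : PTrans V :=
  fun v => if h : ∃ u, α u = some v then some h.choose else none

/-- Partial automorphism: injective, and both it and its inverse are
partial endomorphisms. -/
def IsPAut (G : SimpleGraph V) (α : PTrans V) : Prop :=
  PInjective α ∧ IsPEnd G α ∧ IsPEnd G (pinv α)

/-- The star graph on vertices `{0,1,...,n-1}` with center `0`. -/
def starGraph (n : ℕ) : SimpleGraph (Fin n) :=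
  SimpleGraph.fromRel (fun u _ => (u : ℕ) = 0)

lemma star_adj {n : ℕ} (u v : Fin n) :
    (starGraph n).Adj u v ↔ u ≠ v ∧ ((u : ℕ) = 0 ∨ (v : ℕ) = 0) := by
  simp [starGraph, SimpleGraph.fromRel_adj]

theorem stmt12 (n : ℕ) (hn : 3 ≤ n) :
    {α : PTrans (Fin n) | IsPsEnd (starGraph n) α} =
      ({α : PTrans (Fin n) | α ⟨0, by omega⟩ = some ⟨0, by omega⟩ ∧
          ∀ i : Fin n, i ≠ ⟨0, by omega⟩ → ∀ j, α i = some j → j ≠ ⟨0, by omega⟩} ∪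
        {α : PTrans (Fin n) | α ⟨0, by omega⟩ = none ∧
          ∀ i j : Fin n, α i = some j → j ≠ ⟨0, by omega⟩}) ∪
      {α : PTrans (Fin n) | α ⟨0, by omega⟩ = none ∧ pim α = {⟨0, by omega⟩}} ∪
      {α : PTrans (Fin n) | (∃ j : Fin n, α ⟨0, by omega⟩ = some j ∧ j ≠ ⟨0, by omega⟩) ∧
        ∀ i : Fin n, i ≠ ⟨0, by omega⟩ → ∀ j, α i = some j → j = ⟨0, by omega⟩} := by
  set z : Fin n := ⟨0, by omega⟩ with hzdef
  have hzval : (z : ℕ) = 0 := rfl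
  ext α
  simp only [Set.mem_union, Set.mem_setOf_eq]
  constructor
  · intro h
    cases hz : α z with
    | none =>
      by_cases h0 : ∀ i j, α i = some j → j ≠ z
      · exact Or.inl (Or.inl (Or.inr ⟨rfl, h0⟩))
      · push_neg at h0
        obtain ⟨i, j, hij, rfl⟩ := h0
        refine Or.inl (Or.inr ⟨rfl, ?_⟩)
        ext k
        simp only [pim, Set.mem_setOf_eq, Set.mem_singleton_iff]
        constructor
        · rintro ⟨u, hu⟩
          by_contra hk
          have hu0 : u ≠ z := by rintro rfl; rw [hz] at hu; exact nomatch hu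
          have hi0 : i ≠ z := by rintro rfl; rw [hz] at hij; exact nomatch hij
          have hiu : i ≠ u := by
            rintro rfl; rw [hij] at hu
            exact hk (Option.some_injective _ hu).symm
          have h2 := (h i u z k hij hu).symm.mp
          rw [star_adj, star_adj] at h2
          have hkk := h2 ⟨fun e => hk e.symm, Or.inl hzval⟩
          simp only [ne_eq, Fin.ext_iff, hzval] at hu0 hi0
          rcases hkk.2 with e | e
          · exact hi0 e
          · exact hu0 e
        · rintro rfl; exact ⟨i, hij⟩
    | some j =>
      by_cases hj : j = z
      · subst hj
        refine Or.inl (Or.inl (Or.inl ⟨rfl, ?_⟩))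
        rintro i hi k hik rfl
        have h2 := (h i z z z hik hz).mp
        rw [star_adj, star_adj] at h2
        exact (h2 ⟨hi, Or.inr hzval⟩).1 rfl
      · refine Or.inr ⟨⟨j, rfl, hj⟩, ?_⟩
        intro i hi k hik
        have h2 := (h i z k j hik hz).mp
        rw [star_adj, star_adj] at h2
        have hkj := h2 ⟨hi, Or.inr hzval⟩
        rcases hkj.2 with hk | hj0
        · exact Fin.ext hk
        · exact absurd (Fin.ext (hj0.trans hzval.symm)) hj
  · rintro (((⟨h0, hmap⟩ | ⟨h0, hmap⟩) | ⟨h0, him⟩) | ⟨⟨j, hj, hj0⟩, hmap⟩) <;>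
      intro u v u' v' hu hv <;> rw [star_adj, star_adj]
    · -- case i.a
      have fu : (u : ℕ) = 0 ↔ (u' : ℕ) = 0 := by
        constructor
        · intro e
          have huz : u = z := Fin.ext (e.trans hzval.symm)
          rw [huz, h0] at hu
          exact (congrArg Fin.val (Option.some_injective _ hu).symm).trans hzval
        · intro e
          by_contra hne
          exact hmap u (fun hh => hne (by rw [hh])) u' hu
            (Fin.ext (e.trans hzval.symm))
      have fv : (v : ℕ) = 0 ↔ (v' : ℕ) = 0 := by
        constructor
        · intro e
          have hvz : v = z := Fin.ext (e.trans hzval.symm)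
          rw [hvz, h0] at hv
          exact (congrArg Fin.val (Option.some_injective _ hv).symm).trans hzval
        · intro e
          by_contra hne
          exact hmap v (fun hh => hne (by rw [hh])) v' hv
            (Fin.ext (e.trans hzval.symm))
      simp only [ne_eq, Fin.ext_iff]
      omega
    · -- case i.b
      have fu : (u : ℕ) ≠ 0 := fun e => by
        rw [Fin.ext (e.trans hzval.symm), h0] at hu; exact nomatch hu
      have fv : (v : ℕ) ≠ 0 := fun e => by
        rw [Fin.ext (e.trans hzval.symm), h0] at hv; exact nomatch hv
      have fu' : (u' : ℕ) ≠ 0 := fun e =>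
        hmap u u' hu (Fin.ext (e.trans hzval.symm))
      have fv' : (v' : ℕ) ≠ 0 := fun e =>
        hmap v v' hv (Fin.ext (e.trans hzval.symm))
      simp only [ne_eq, Fin.ext_iff]
      omega
    · -- case ii
      have fu : (u : ℕ) ≠ 0 := fun e => by
        rw [Fin.ext (e.trans hzval.symm), h0] at hu; exact nomatch hu
      have fv : (v : ℕ) ≠ 0 := fun e => by
        rw [Fin.ext (e.trans hzval.symm), h0] at hv; exact nomatch hv
      have fu' : (u' : ℕ) = 0 := by
        have : u' ∈ pim α := ⟨u, hu⟩
        rw [him] at this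
        exact (congrArg Fin.val this).trans hzval
      have fv' : (v' : ℕ) = 0 := by
        have : v' ∈ pim α := ⟨v, hv⟩
        rw [him] at this
        exact (congrArg Fin.val this).trans hzval
      simp only [ne_eq, Fin.ext_iff]
      omega
    · -- case iii
      have hjv : (j : ℕ) ≠ 0 := fun e => hj0 (Fin.ext (e.trans hzval.symm))
      have fu1 : (u : ℕ) = 0 → (u' : ℕ) = (j : ℕ) := by
        intro e
        rw [Fin.ext (e.trans hzval.symm), hj] at hu
        exact congrArg Fin.val (Option.some_injective _ hu).symm
      have fu2 : (u : ℕ) ≠ 0 → (u' : ℕ) = 0 := by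
        intro e
        have := hmap u (fun hh => e (by rw [hh])) u' hu
        exact (congrArg Fin.val this).trans hzval
      have fv1 : (v : ℕ) = 0 → (v' : ℕ) = (j : ℕ) := by
        intro e
        rw [Fin.ext (e.trans hzval.symm), hj] at hv
        exact congrArg Fin.val (Option.some_injective _ hv).symm
      have fv2 : (v : ℕ) ≠ 0 → (v' : ℕ) = 0 := by
        intro e
        have := hmap v (fun hh => e (by rw [hh])) v' hv
        exact (congrArg Fin.val this).trans hzval
      simp only [ne_eq, Fin.ext_iff]
      omega
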